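/- Under the hypotheses of the Lipschitz estimate |H[ρ₁](x,t) - H[ρ₂](x,t)| ≤ L·e^{2Lt}·‖ρ₁ - ρ₂‖ (with ‖·‖ the weighted norm ess sup e^{-2Lt}|·|), the integral operator T defined by (Tρ)(ξ,τ) = ρ_0(x(0;ξ,τ)) + ∫_0^τ H[ρ](x(t;ξ,τ), t) dt is a strict contraction on X with contraction constant 1/2, i.e., ‖Tρ₁ - Tρ₂‖ ≤ (1/2)‖ρ₁ - ρ₂‖ for all ρ₁, ρ₂ ∈ X. -/

import Mathlib

open Set Real MeasureTheory intervalIntegral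

/-- Given the Lipschitz estimate for `H`, the integral operator
`(Tρ)(ξ,τ) = ρ₀(x(0;ξ,τ)) + ∫₀^τ H[ρ](x(t;ξ,τ),t) dt` is a `1/2`-contraction
in the weighted norm `ess sup e^{-2Lt}|·|` (expressed via common bounds `C`). -/
theorem observable_T_contraction {Ω : Type*} (Tfin L : ℝ) (hL : 0 < L)
    (H : (Ω × ℝ → ℝ) → (Ω × ℝ → ℝ))
    (xchar : ℝ → Ω × ℝ → Ω)
    (ρ₀ : Ω → ℝ)
    (hH_lip : ∀ (ρ₁ ρ₂ : Ω × ℝ → ℝ) (C : ℝ), 0 ≤ C →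
      (∀ p : Ω × ℝ, p.2 ∈ Icc 0 Tfin → Real.exp (-2 * L * p.2) * |ρ₁ p - ρ₂ p| ≤ C) →
      ∀ p : Ω × ℝ, p.2 ∈ Icc 0 Tfin →
        |H ρ₁ p - H ρ₂ p| ≤ L * Real.exp (2 * L * p.2) * C)
    (hint : ∀ (ρ : Ω × ℝ → ℝ) (p : Ω × ℝ),
      IntervalIntegrable (fun t => H ρ (xchar t p, t)) volume 0 p.2)
    (T : (Ω × ℝ → ℝ) → (Ω × ℝ → ℝ))
    (hT : ∀ (ρ : Ω × ℝ → ℝ) (p : Ω × ℝ),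
      T ρ p = ρ₀ (xchar 0 p) + ∫ t in (0:ℝ)..p.2, H ρ (xchar t p, t)) :
    ∀ (ρ₁ ρ₂ : Ω × ℝ → ℝ) (C : ℝ), 0 ≤ C →
      (∀ p : Ω × ℝ, p.2 ∈ Icc 0 Tfin → Real.exp (-2 * L * p.2) * |ρ₁ p - ρ₂ p| ≤ C) →
      ∀ p : Ω × ℝ, p.2 ∈ Icc 0 Tfin →
        Real.exp (-2 * L * p.2) * |T ρ₁ p - T ρ₂ p| ≤ (1/2) * C := by
  intro ρ₁ ρ₂ C hC hbound p hp
  obtain ⟨hτ0, hτT⟩ := hp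
  set τ := p.2 with hτ
  -- difference is the integral of the difference
  have hdiff : T ρ₁ p - T ρ₂ p
      = ∫ t in (0:ℝ)..τ, (H ρ₁ (xchar t p, t) - H ρ₂ (xchar t p, t)) := by
    rw [hT, hT, intervalIntegral.integral_sub (hint ρ₁ p) (hint ρ₂ p)]
    ring
  -- pointwise bound on the integrand
  have hpt : ∀ t ∈ Set.uIoc (0:ℝ) τ,
      ‖H ρ₁ (xchar t p, t) - H ρ₂ (xchar t p, t)‖ ≤ L * Real.exp (2 * L * t) * C := by
    intro t ht
    rw [Set.uIoc_of_le hτ0] at ht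
    exact hH_lip ρ₁ ρ₂ C hC hbound (xchar t p, t) ⟨le_of_lt ht.1, ht.2.trans hτT⟩
  have hgint : IntervalIntegrable (fun t => L * Real.exp (2 * L * t) * C) volume 0 τ := by
    have hc : Continuous fun t : ℝ => L * Real.exp (2 * L * t) * C :=
      (continuous_const.mul (Real.continuous_exp.comp
        (continuous_const.mul continuous_id))).mul continuous_const
    exact hc.intervalIntegrable 0 τ
  have hnorm : ‖∫ t in (0:ℝ)..τ, (H ρ₁ (xchar t p, t) - H ρ₂ (xchar t p, t))‖
      ≤ |∫ t in (0:ℝ)..τ, L * Real.exp (2 * L * t) * C| :=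
    intervalIntegral.norm_integral_le_abs_of_norm_le
      ((ae_restrict_iff' measurableSet_uIoc).mpr (Filter.Eventually.of_forall hpt)) hgint
  -- compute the bounding integral
  have hexp : ∫ t in (0:ℝ)..τ, Real.exp (2 * L * t)
      = (2 * L)⁻¹ * (Real.exp (2 * L * τ) - 1) := by
    have h2L : (2 * L) ≠ 0 := by positivity
    have := intervalIntegral.integral_comp_mul_left (fun x => Real.exp x) h2L (a := 0) (b := τ)
    simp only [mul_zero, integral_exp, Real.exp_zero, smul_eq_mul] at this
    rw [this]
  have hval : ∫ t in (0:ℝ)..τ, L * Real.exp (2 * L * t) * C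
      = C / 2 * (Real.exp (2 * L * τ) - 1) := by
    have : (fun t => L * Real.exp (2 * L * t) * C)
        = fun t => (L * C) * Real.exp (2 * L * t) := by funext t; ring
    rw [this, intervalIntegral.integral_const_mul, hexp]
    field_simp
  have hsub : Real.exp (2 * L * τ) - 1 ≤ Real.exp (2 * L * τ) := by linarith
  have hsubpos : 0 ≤ Real.exp (2 * L * τ) - 1 := by
    have : (1:ℝ) ≤ Real.exp (2 * L * τ) := Real.one_le_exp (by positivity)
    linarith
  have hfinal : |T ρ₁ p - T ρ₂ p| ≤ C / 2 * Real.exp (2 * L * τ) := by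
    rw [hdiff]
    calc |∫ t in (0:ℝ)..τ, (H ρ₁ (xchar t p, t) - H ρ₂ (xchar t p, t))|
        ≤ |∫ t in (0:ℝ)..τ, L * Real.exp (2 * L * t) * C| := hnorm
      _ = C / 2 * (Real.exp (2 * L * τ) - 1) := by
          rw [hval, abs_of_nonneg (by positivity)]
      _ ≤ C / 2 * Real.exp (2 * L * τ) := by
          apply mul_le_mul_of_nonneg_left hsub (by positivity)
  calc Real.exp (-2 * L * τ) * |T ρ₁ p - T ρ₂ p|
      ≤ Real.exp (-2 * L * τ) * (C / 2 * Real.exp (2 * L * τ)) :=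
        mul_le_mul_of_nonneg_left hfinal (le_of_lt (Real.exp_pos _))
    _ = (1/2) * C * (Real.exp (-2 * L * τ) * Real.exp (2 * L * τ)) := by ring
    _ = (1/2) * C := by rw [← Real.exp_add]; ring_nf; simp
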